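/- Let L be a real n×n matrix with L_{ij} ≤ 0 for all i ≠ j and with every row summing to zero, and let M = diag(M_1,…,M_n) and D = diag(D_1,…,D_n) be diagonal matrices with all M_i > 0 and D_i > 0. Suppose the stability condition (C) holds: L_{ii} ≤ D_i²/(2·M_i) for every i, i.e., 2·M_i·L_{ii} ≤ D_i². Then for every λ ∈ ℂ with Re(λ) ≥ 0 and Im(λ) ≠ 0, the complex matrix L + λ·D + λ²·M (entries coerced to ℂ) is invertible, i.e., det(L + λD + λ²M) ≠ 0. -/

import Mathlib

open Matrix

/-- Key scalar estimate: for `c ≥ 0`, `d, m > 0` with `2mc ≤ d²`, and `λ = p + qi`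
with `p ≥ 0`, `q ≠ 0`, we have `c < |c + λ d + λ² m|`. -/
lemma key_abs_lt (c d m : ℝ) (hc : 0 ≤ c) (hd : 0 < d) (hm : 0 < m)
    (hC : 2 * m * c ≤ d ^ 2) (lam : ℂ) (hp : 0 ≤ lam.re) (hq : lam.im ≠ 0) :
    c < ‖(c : ℂ) + lam * (d : ℂ) + lam ^ 2 * (m : ℂ)‖ := by
  set p := lam.re
  set q := lam.im
  set z : ℂ := (c : ℂ) + lam * (d : ℂ) + lam ^ 2 * (m : ℂ) with hz
  have hre : z.re = c + p * d + (p ^ 2 - q ^ 2) * m := by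
    simp [hz, pow_two, Complex.add_re, Complex.mul_re, Complex.mul_im]
    rfl
  have him : z.im = q * d + 2 * p * q * m := by
    simp only [hz, pow_two, Complex.add_im, Complex.mul_im, Complex.mul_re,
      Complex.ofReal_re, Complex.ofReal_im]
    ring
  have hq2 : 0 < q ^ 2 := pow_pos (abs_pos.mpr hq) 2 |>.trans_eq (by rw [sq_abs])
  have hsq : c ^ 2 < ‖z‖ ^ 2 := by
    rw [Complex.sq_norm, Complex.normSq_apply, hre, him]
    nlinarith [sq_nonneg (c + p * d + p ^ 2 * m), mul_pos hm hm, mul_pos hq2 hq2,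
      mul_nonneg (mul_nonneg hp hq2.le) (mul_pos hd hm).le,
      mul_nonneg (mul_nonneg (mul_nonneg hp hp) hq2.le) (mul_pos hm hm).le,
      mul_nonneg hq2.le (sub_nonneg.mpr hC), mul_nonneg hp hd.le,
      mul_nonneg (mul_nonneg hp hp) hm.le]
  exact lt_of_pow_lt_pow_left₀ 2 (norm_nonneg z) hsq

/-- For Laplacian-type `L` and positive diagonal `M`, `D` satisfying
the stability condition (C): `2 M_i L_{ii} ≤ D_i²` for all `i`, the complex pencil
`L + λD + λ²M` is invertible for every `λ` with `Re λ ≥ 0` and `Im λ ≠ 0`. -/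
theorem pencil_invertible_of_condition_C
    (n : ℕ) (L : Matrix (Fin n) (Fin n) ℝ)
    (hoff : ∀ i j, i ≠ j → L i j ≤ 0)
    (hrow : ∀ i, ∑ j, L i j = 0)
    (Mv Dv : Fin n → ℝ) (hM : ∀ i, 0 < Mv i) (hD : ∀ i, 0 < Dv i)
    (M D : Matrix (Fin n) (Fin n) ℝ)
    (hMdef : M = Matrix.diagonal Mv) (hDdef : D = Matrix.diagonal Dv)
    (hC : ∀ i, L i i ≤ (Dv i) ^ 2 / (2 * Mv i))
    (lam : ℂ) (hre : 0 ≤ lam.re) (him : lam.im ≠ 0) :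
    (L.map Complex.ofReal + lam • D.map Complex.ofReal +
      lam ^ 2 • M.map Complex.ofReal).det ≠ 0 := by
  subst hMdef hDdef
  apply det_ne_zero_of_sum_row_lt_diag
  intro k
  -- diagonal nonnegativity
  have hLkk : 0 ≤ L k k := by
    have h := hrow k
    rw [← Finset.add_sum_erase _ _ (Finset.mem_univ k)] at h
    have : ∑ j ∈ Finset.univ.erase k, L k j ≤ 0 :=
      Finset.sum_nonpos fun j hj => hoff k j (Finset.ne_of_mem_erase hj).symm
    linarith
  -- off-diagonal sum equals L k k
  have hsum : ∑ j ∈ Finset.univ.erase k,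
      ‖(L.map Complex.ofReal + lam • (Matrix.diagonal Dv).map Complex.ofReal +
        lam ^ 2 • (Matrix.diagonal Mv).map Complex.ofReal) k j‖ = L k k := by
    have h := hrow k
    rw [← Finset.add_sum_erase _ _ (Finset.mem_univ k)] at h
    have h2 : ∑ j ∈ Finset.univ.erase k, (-(L k j)) = L k k := by
      rw [Finset.sum_neg_distrib]; linarith
    rw [← h2]
    apply Finset.sum_congr rfl
    intro j hj
    have hjk : k ≠ j := (Finset.ne_of_mem_erase hj).symm
    simp [Matrix.add_apply, Matrix.smul_apply, Matrix.map_apply,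
      Matrix.diagonal_apply_ne _ hjk, Complex.norm_real,
      abs_of_nonpos (hoff k j hjk)]
  rw [hsum]
  -- diagonal entry
  have hdiag : (L.map Complex.ofReal + lam • (Matrix.diagonal Dv).map Complex.ofReal +
      lam ^ 2 • (Matrix.diagonal Mv).map Complex.ofReal) k k
      = (L k k : ℂ) + lam * (Dv k : ℂ) + lam ^ 2 * (Mv k : ℂ) := by
    simp [Matrix.add_apply, Matrix.smul_apply, Matrix.map_apply,
      Matrix.diagonal_apply_eq, smul_eq_mul]
  rw [hdiag]
  have hC' : 2 * Mv k * L k k ≤ (Dv k) ^ 2 := by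
    have := hC k
    rw [le_div_iff₀ (mul_pos two_pos (hM k))] at this
    linarith
  simpa using
    key_abs_lt (L k k) (Dv k) (Mv k) hLkk (hD k) (hM k) hC' lam hre him
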